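/- Let G be a graph, let Q = v_1 v_2 ... v_p v_1 be a smallest induced odd cycle in G of length p ≥ 5, and let w ∈ V(G)∖V(Q) with q(w) = 1. Then d_Q(w) ∈ {1, 2}; moreover, if d_Q(w) = 2, then there is an index i such that N_Q(w) = {v_i, v_{i+2}}. -/
import Mathlib


/-- `u : ZMod k → V` lists the vertices (in cyclic order) of an induced cycle of
length `k` in `G`. -/
def IsInducedCycle {V : Type*} (G : SimpleGraph V) {k : ℕ} (u : ZMod k → V) : Prop :=
  Function.Injective u ∧ ∀ i j : ZMod k, G.Adj (u i) (u j) ↔ (j = i + 1 ∨ i = j + 1)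

/-- `v : ZMod p → V` is a smallest induced odd cycle of `G` of length `p ≥ 5`:
an induced odd cycle of length `p ≥ 5` such that `G` has no induced odd cycle of
length `k` with `5 ≤ k < p`. -/
def IsSmallestInducedOddCycle {V : Type*} (G : SimpleGraph V) {p : ℕ}
    (v : ZMod p → V) : Prop :=
  5 ≤ p ∧ Odd p ∧ IsInducedCycle G v ∧
    ∀ k : ℕ, 5 ≤ k → k < p → Odd k → ∀ u : ZMod k → V, ¬ IsInducedCycle G u

/-- `w` has `i` consecutive neighbours on the cycle `v : ZMod p → V`:
there is an index `j` with `{v_j, v_{j+1}, …, v_{j+i-1}} ⊆ N(w)`. -/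
def HasConsecutiveNbrs {V : Type*} (G : SimpleGraph V) {p : ℕ} (v : ZMod p → V)
    (w : V) (i : ℕ) : Prop :=
  ∃ j : ZMod p, ∀ k : ℕ, k < i → G.Adj w (v (j + (k : ZMod p)))

/-- `qval G v w` is `q(w)`: the largest `i` such that `w` has `i` consecutive
neighbours on the cycle `v : ZMod p → V` (necessarily `i ≤ p`). -/
noncomputable def qval {V : Type*} (G : SimpleGraph V) {p : ℕ} (v : ZMod p → V)
    (w : V) : ℕ :=
  sSup {i : ℕ | i ≤ p ∧ HasConsecutiveNbrs G v w i}

lemma natCast_inj_lt {n a b : ℕ} (ha : a < n) (hb : b < n) (h : (a : ZMod n) = b) : a = b := by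
  have := congrArg ZMod.val h
  rwa [ZMod.val_natCast_of_lt ha, ZMod.val_natCast_of_lt hb] at this


open Classical in
lemma exists_odd_gap {p : ℕ} (hp : Odd p) (P : ℕ → Prop) (h0 : P 0) (hpP : P p) :
    ∃ s g : ℕ, Odd g ∧ P s ∧ P (s + g) ∧ s + g ≤ p ∧
      ∀ t, s < t → t < s + g → ¬ P t := by
  classical
  set T : Finset ℕ := (Finset.range (p+1)).filter P with hT
  have hpT : p ∈ T := by simp [hT, hpP]
  have h0T : 0 ∈ T := by simp [hT, h0]
  set O : Finset ℕ := T.filter Odd with hO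
  have hOne : O.Nonempty := ⟨p, by simp [hO, hpT, hp]⟩
  set s' := O.min' hOne with hs'
  have hs'O : s' ∈ O := O.min'_mem hOne
  have hs'T : s' ∈ T := (Finset.mem_filter.mp hs'O).1
  have hs'odd : Odd s' := (Finset.mem_filter.mp hs'O).2
  have hs'pos : 0 < s' := hs'odd.pos
  set L : Finset ℕ := T.filter (· < s') with hL
  have hLne : L.Nonempty := ⟨0, by simp [hL, h0T, hs'pos]⟩
  set s := L.max' hLne with hs
  have hsL : s ∈ L := L.max'_mem hLne
  have hsT : s ∈ T := (Finset.mem_filter.mp hsL).1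
  have hslt : s < s' := by simpa using (Finset.mem_filter.mp hsL).2
  have hseven : ¬ Odd s := by
    intro hodd
    have : s' ≤ s := O.min'_le s (by simp [hO, hsT, hodd])
    omega
  refine ⟨s, s' - s, ?_, ?_, ?_, ?_, ?_⟩
  · rcases hs'odd with ⟨k, hk⟩
    rcases Nat.not_odd_iff_even.mp hseven with ⟨m, hm⟩
    exact ⟨k - m, by omega⟩
  · exact (Finset.mem_filter.mp hsT).2
  · rw [Nat.add_sub_cancel' hslt.le]
    exact (Finset.mem_filter.mp hs'T).2
  · have := Finset.mem_range.mp (Finset.mem_filter.mp hs'T).1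
    omega
  · intro t h1 h2 hPt
    rw [Nat.add_sub_cancel' hslt.le] at h2
    have hs'p : s' ≤ p := by
      have := Finset.mem_range.mp (Finset.mem_filter.mp hs'T).1; omega
    have htT : t ∈ T := by simp [hT, hPt]; omega
    have : t ≤ s := L.le_max' t (by simp [hL, htT, h2])
    omega

lemma induced_cycle_of_gap {V : Type*} (G : SimpleGraph V) {p : ℕ} (v : ZMod p → V)
    (hv : IsInducedCycle G v) (w : V) (hw : w ∉ Set.range v)
    (b : ZMod p) (g : ℕ) (hg3 : 3 ≤ g) (hgp : g + 2 ≤ p)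
    (h0 : G.Adj w (v b)) (hg : G.Adj w (v (b + (g : ZMod p))))
    (hmid : ∀ t : ℕ, 0 < t → t < g → ¬ G.Adj w (v (b + (t : ZMod p)))) :
    IsInducedCycle G (fun i : ZMod (g+2) =>
      if i.val ≤ g then v (b + (i.val : ZMod p)) else w) := by
  haveI : NeZero (g+2) := ⟨by omega⟩
  haveI : NeZero p := ⟨by omega⟩
  have hvallt : ∀ i : ZMod (g+2), i.val < g + 2 := fun i => ZMod.val_lt i
  have hsucc : ∀ i : ZMod (g+2), i.val ≤ g → (i + 1).val = i.val + 1 := by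
    intro i hi
    have h1 : i + 1 = ((i.val + 1 : ℕ) : ZMod (g+2)) := by
      push_cast [ZMod.natCast_zmod_val]; ring
    rw [h1, ZMod.val_natCast_of_lt (by omega)]
  have hwrap : ∀ i : ZMod (g+2), i.val = g + 1 → i + 1 = 0 := by
    intro i hi
    have h1 : i + 1 = ((i.val + 1 : ℕ) : ZMod (g+2)) := by
      push_cast [ZMod.natCast_zmod_val]; ring
    rw [h1, hi, show g + 1 + 1 = g + 2 from rfl]
    exact_mod_cast ZMod.natCast_self (g+2)
  -- adjacency on the arc, in terms of natural numbers
  have harc : ∀ a c : ℕ, a ≤ g → c ≤ g →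
      (G.Adj (v (b + (a : ZMod p))) (v (b + (c : ZMod p))) ↔ (c = a + 1 ∨ a = c + 1)) := by
    intro a c ha hc
    rw [hv.2]
    constructor
    · rintro (h | h)
      · left
        have : (c : ZMod p) = ((a + 1 : ℕ) : ZMod p) := by push_cast; linear_combination h
        exact natCast_inj_lt (by omega) (by omega) this
      · right
        have : (a : ZMod p) = ((c + 1 : ℕ) : ZMod p) := by push_cast; linear_combination h
        exact natCast_inj_lt (by omega) (by omega) this
    · rintro (rfl | rfl)
      · left; push_cast; ring
      · right; push_cast; ring
  -- w's adjacency to arc vertices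
  have hwadj : ∀ a : ℕ, a ≤ g → (G.Adj w (v (b + (a : ZMod p))) ↔ (a = 0 ∨ a = g)) := by
    intro a ha
    constructor
    · intro h
      by_contra hcon
      push_neg at hcon
      exact hmid a (by omega) (by omega) h
    · rintro (rfl | rfl)
      · simpa using h0
      · exact hg
  constructor
  · intro i j h
    by_cases hi : i.val ≤ g <;> by_cases hj : j.val ≤ g <;>
      simp only [hi, hj, ite_true, ite_false, if_true, if_false] at h
    · have h2 : (i.val : ZMod p) = (j.val : ZMod p) := by
        have := hv.1 h
        exact add_left_cancel this
      exact ZMod.val_injective _ (natCast_inj_lt (by omega) (by omega) h2)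
    · exact absurd ⟨_, h⟩ hw
    · exact absurd ⟨_, h.symm⟩ hw
    · apply ZMod.val_injective
      have := hvallt i; have := hvallt j; omega
  · intro i j
    by_cases hi : i.val ≤ g <;> by_cases hj : j.val ≤ g <;>
      simp only [hi, hj, ite_true, ite_false, if_true, if_false]
    · -- both arc vertices
      rw [harc i.val j.val hi hj]
      constructor
      · rintro (h | h)
        · left; apply ZMod.val_injective; rw [hsucc i hi, h]
        · right; apply ZMod.val_injective; rw [hsucc j hj, h]
      · rintro (rfl | rfl)
        · left; exact hsucc i hi
        · right; exact hsucc j hj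
    · -- j is w
      have hjval : j.val = g + 1 := by have := hvallt j; omega
      have lhs : G.Adj (v (b + (i.val : ZMod p))) w ↔ (i.val = 0 ∨ i.val = g) := by
        rw [← hwadj i.val hi]
        exact ⟨fun h => h.symm, fun h => h.symm⟩
      rw [lhs]
      constructor
      · rintro (h | h)
        · right
          rw [hwrap j hjval]
          apply ZMod.val_injective; rw [h, ZMod.val_zero]
        · left
          apply ZMod.val_injective; rw [hsucc i hi, h, hjval]
      · rintro (h | h)
        · right
          have := congrArg ZMod.val h
          rw [hsucc i hi, hjval] at this; omega
        · left
          rw [hwrap j hjval] at h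
          have := congrArg ZMod.val h
          rwa [ZMod.val_zero] at this
    · -- i is w
      have hival : i.val = g + 1 := by have := hvallt i; omega
      have lhs : G.Adj w (v (b + (j.val : ZMod p))) ↔ (j.val = 0 ∨ j.val = g) :=
        hwadj j.val hj
      rw [lhs]
      constructor
      · rintro (h | h)
        · left
          rw [hwrap i hival]
          apply ZMod.val_injective; rw [h, ZMod.val_zero]
        · right
          apply ZMod.val_injective; rw [hsucc j hj, h, hival]
      · rintro (h | h)
        · left
          rw [hwrap i hival] at h
          have := congrArg ZMod.val h
          rwa [ZMod.val_zero] at this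
        · right
          have := congrArg ZMod.val h
          rw [hsucc j hj, hival] at this; omega
    · -- both w
      have hival : i.val = g + 1 := by have := hvallt i; omega
      have hjval : j.val = g + 1 := by have := hvallt j; omega
      simp only [SimpleGraph.irrefl, false_iff]
      rintro (h | h)
      · rw [hwrap i hival] at h
        have := congrArg ZMod.val h
        rw [ZMod.val_zero] at this; omega
      · rw [hwrap j hjval] at h
        have := congrArg ZMod.val h
        rw [ZMod.val_zero] at this; omega


/-- Let `G` be a graph, let `Q` be a smallest induced odd cycle of `G` of length
`p ≥ 5`, and let `w ∉ Q` with `q(w) = 1`. Then `d_Q(w) ∈ {1, 2}`; moreover if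
`d_Q(w) = 2` then `N_Q(w) = {v_i, v_{i+2}}` for some index `i`. -/
theorem qval_one_degree {V : Type*} [Fintype V] (G : SimpleGraph V)
    {p : ℕ} (v : ZMod p → V) (hQ : IsSmallestInducedOddCycle G v)
    (w : V) (hw : w ∉ Set.range v) (hq : qval G v w = 1) :
    ({j : ZMod p | G.Adj w (v j)}.ncard = 1 ∨ {j : ZMod p | G.Adj w (v j)}.ncard = 2) ∧
    ({j : ZMod p | G.Adj w (v j)}.ncard = 2 →
      ∃ i : ZMod p, {j : ZMod p | G.Adj w (v j)} = {i, i + 2}) := by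
  obtain ⟨hp5, hpodd, hcyc, hmin⟩ := hQ
  haveI : NeZero p := ⟨by omega⟩
  set S : Set ℕ := {i : ℕ | i ≤ p ∧ HasConsecutiveNbrs G v w i} with hS
  have hbdd : BddAbove S := ⟨p, fun x hx => hx.1⟩
  have hSne : S.Nonempty := ⟨0, by omega, 0, fun k hk => absurd hk (by omega)⟩
  have h1S : 1 ∈ S := by
    have := Nat.sSup_mem hSne hbdd
    rwa [show sSup S = 1 from hq] at this
  obtain ⟨a, ha⟩ := h1S.2
  have hNa : G.Adj w (v a) := by simpa using ha 0 (by omega)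
  -- no two consecutive neighbours
  have hno2 : ∀ j : ZMod p, ¬(G.Adj w (v j) ∧ G.Adj w (v (j+1))) := by
    rintro j ⟨hj, hj1⟩
    have h2S : 2 ∈ S := by
      refine ⟨by omega, j, fun k hk => ?_⟩
      interval_cases k
      · simpa using hj
      · simpa using hj1
    have : 2 ≤ sSup S := le_csSup hbdd h2S
    rw [show sSup S = 1 from hq] at this
    omega
  set P : ℕ → Prop := fun t => G.Adj w (v (a + (t : ZMod p))) with hP
  have hP0 : P 0 := by simpa [hP] using hNa
  have hPp : P p := by simpa [hP, ZMod.natCast_self] using hNa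
  obtain ⟨s, g, hgodd, hPs, hPsg, hsgp, hmid⟩ := exists_odd_gap hpodd P hP0 hPp
  set b : ZMod p := a + (s : ZMod p) with hb
  have hshift : ∀ t : ℕ, b + (t : ZMod p) = a + ((s + t : ℕ) : ZMod p) := by
    intro t; rw [hb]; push_cast; ring
  have hNb : G.Adj w (v b) := by
    have := hPs; rw [hP] at this
    simpa [hb] using this
  have hg1 : g ≠ 1 := by
    rintro rfl
    refine hno2 b ⟨hNb, ?_⟩
    have : b + 1 = a + ((s + 1 : ℕ) : ZMod p) := by rw [hb]; push_cast; ring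
    rw [this]
    exact hPsg
  have hg3 : 3 ≤ g := by
    rcases hgodd with ⟨k, hk⟩; omega
  by_cases hgp : g = p
  · -- only one neighbour
    have hs0 : s = 0 := by omega
    have hba : b = a := by simp [hb, hs0]
    have hset : {j : ZMod p | G.Adj w (v j)} = {a} := by
      ext j
      simp only [Set.mem_setOf_eq, Set.mem_singleton_iff]
      constructor
      · intro hj
        by_contra hne
        set t := (j - a).val with ht
        have hja : j = a + (t : ZMod p) := by rw [ht, ZMod.natCast_zmod_val]; ring
        have ht0 : t ≠ 0 := by
          intro h0
          apply hne
          rw [hja, h0]; simp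
        have htp : t < p := ZMod.val_lt _
        have : ¬ P t := by
          have := hmid t (by omega) (by omega)
          simpa [hs0] using this
        rw [hP] at this
        rw [hja] at hj
        exact this hj
      · rintro rfl; exact hNa
    rw [hset]
    simp
  · -- two neighbours at distance 2
    have hglt : g < p := by omega
    have hgle : g + 2 ≤ p := by
      rcases hgodd with ⟨k, hk⟩; rcases hpodd with ⟨m, hm⟩; omega
    have hNc : G.Adj w (v (b + (g : ZMod p))) := by
      rw [hshift g]
      exact hPsg
    have hmid' : ∀ t : ℕ, 0 < t → t < g → ¬ G.Adj w (v (b + (t : ZMod p))) := by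
      intro t h1 h2
      rw [hshift t]
      exact hmid (s + t) (by omega) (by omega)
    have hic := induced_cycle_of_gap G v hcyc w hw b g hg3 hgle hNb hNc hmid'
    have hodd2 : Odd (g + 2) := by rcases hgodd with ⟨k, hk⟩; exact ⟨k + 1, by omega⟩
    have hge : p ≤ g + 2 := by
      by_contra hlt
      push_neg at hlt
      exact hmin (g + 2) (by omega) hlt hodd2 _ hic
    have hgp2 : g + 2 = p := by omega
    set c : ZMod p := b + (g : ZMod p) with hc
    have hc2 : c + 2 = b := by
      rw [hc]
      have : ((g : ZMod p) + 2) = ((g + 2 : ℕ) : ZMod p) := by push_cast; ring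
      rw [add_assoc, this, hgp2, ZMod.natCast_self, add_zero]
    have hcb : c ≠ b := by
      intro h
      have : (g : ZMod p) = 0 := by
        have := h; rw [hc] at this
        exact by linear_combination this
      have := congrArg ZMod.val this
      rw [ZMod.val_natCast_of_lt hglt, ZMod.val_zero] at this
      omega
    have hset : {j : ZMod p | G.Adj w (v j)} = {c, b} := by
      ext j
      simp only [Set.mem_setOf_eq, Set.mem_insert_iff, Set.mem_singleton_iff]
      constructor
      · intro hj
        set t := (j - b).val with ht
        have hjb : j = b + (t : ZMod p) := by rw [ht, ZMod.natCast_zmod_val]; ring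
        have htp : t < p := ZMod.val_lt _
        rcases Nat.lt_or_ge t g with hlt | hge'
        · rcases Nat.eq_zero_or_pos t with h0 | h0
          · right; rw [hjb, h0]; simp
          · rw [hjb] at hj
            exact absurd hj (hmid' t h0 hlt)
        · rcases Nat.eq_or_lt_of_le hge' with h0 | h0
          · left; rw [hjb, ← h0, hc]
          · -- t = g + 1 = p - 1
            have htg1 : t = g + 1 := by omega
            exfalso
            apply hno2 j
            refine ⟨hj, ?_⟩
            have : j + 1 = b := by
              rw [hjb, htg1]
              have : ((g + 1 : ℕ) : ZMod p) + 1 = ((g + 2 : ℕ) : ZMod p) := by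
                push_cast; ring
              rw [add_assoc, this, hgp2, ZMod.natCast_self, add_zero]
            rw [this]
            exact hNb
      · rintro (rfl | rfl)
        · exact hNc
        · exact hNb
    rw [hset]
    constructor
    · right; exact Set.ncard_pair hcb
    · intro _
      exact ⟨c, by rw [hc2]⟩
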